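/- Let G be a countably infinite set and let V : G → ℝ be bounded above and satisfy: (a) the image of V has no accumulation point in ℝ, and (b) every level set {z ∈ G : V(z) = x} is finite; enumerate the negative values of V as 0 > t_0 > t_1 > t_2 > ⋯ (an infinite list). Let g : G → ℝ be any function, let T ⊆ G be finite, let 0 ≤ k < |T|, let B ⊆ G be finite with |B| = k, and let φ : G∖B → G∖T be any bijection. Then limsup_{n→∞} |t_n − t_{n−1}|^{-1} · max{ |V(φ(z)) + g_{φ(z)} − V(z)| : z ∈ G∖B, V(z) ∈ [t_n, 0] } ≥ 1 − limsup_{n→∞} |t_n − t_{n−1}|^{-1} · max{ |g_z| : z ∈ G, V(z) ∈ [t_n, 0] }. -/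

import Mathlib

open MeasureTheory Filter Set

private lemma slab_finite {G : Type*} {V : G → ℝ}
    (hacc : ∀ x : ℝ, ¬ AccPt x (Filter.principal (Set.range V)))
    (hlevel : ∀ x : ℝ, {z : G | V z = x}.Finite) (a b : ℝ) :
    {z : G | V z ∈ Set.Icc a b}.Finite := by
  by_contra h
  have himg : (V '' {z : G | V z ∈ Set.Icc a b}).Infinite := by
    intro hfin
    apply h
    have hsub : {z : G | V z ∈ Set.Icc a b} ⊆
        ⋃ x ∈ V '' {z : G | V z ∈ Set.Icc a b}, {z : G | V z = x} := by
      intro z hz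
      exact Set.mem_biUnion (Set.mem_image_of_mem V hz) rfl
    exact ((hfin.biUnion fun x _ => hlevel x).subset hsub)
  have hsub2 : V '' {z : G | V z ∈ Set.Icc a b} ⊆ Set.Icc a b := by
    rintro _ ⟨z, hz, rfl⟩; exact hz
  obtain ⟨x, -, hx⟩ := himg.exists_accPt_of_subset_isCompact isCompact_Icc hsub2
  exact hacc x (hx.mono (principal_mono.2 (Set.image_subset_range _ _)))

private lemma strictAnti_tendsto_atBot {s : Set ℝ}
    (hacc : ∀ x : ℝ, ¬ AccPt x (Filter.principal s))
    {t : ℕ → ℝ} (ht : StrictAnti t) (hsub : Set.range t ⊆ s) :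
    Filter.Tendsto t Filter.atTop Filter.atBot := by
  by_cases hbdd : BddBelow (Set.range t)
  · exfalso
    have htend : Filter.Tendsto t Filter.atTop (nhds (⨅ n, t n)) :=
      tendsto_atTop_ciInf ht.antitone hbdd
    apply hacc (⨅ n, t n)
    rw [accPt_iff_nhds]
    intro U hU
    obtain ⟨n, hn⟩ := (htend.eventually_mem hU).exists
    refine ⟨t n, ⟨hn, hsub ⟨n, rfl⟩⟩, ?_⟩
    have h1 : (⨅ m, t m) ≤ t (n + 1) := ciInf_le hbdd (n + 1)
    exact ne_of_gt (lt_of_le_of_lt h1 (ht (Nat.lt_succ_self n)))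
  · rw [not_bddBelow_iff] at hbdd
    refine tendsto_atBot.2 fun c => ?_
    obtain ⟨y, ⟨n, rfl⟩, hy⟩ := hbdd c
    exact Filter.eventually_atTop.2 ⟨n, fun m hm => le_trans (ht.antitone hm) hy.le⟩

/-- **Chain of mismatches lower bound** (bounded-above case): if `V` is bounded above, its
image has no accumulation point and has finite level sets, with negative values enumerated
`0 > t_0 > t_1 > ⋯`, then for any finite `T`, any `k < |T|`, any finite `B` with `|B| = k`
and any bijection `φ : G∖B → G∖T`,
`limsup_n |t_n − t_{n−1}|⁻¹ · max{ |V(φ(z)) + g_{φ(z)} − V(z)| : z ∈ G∖B, V(z) ∈ [t_n, 0] }`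
is at least `1 − limsup_n |t_n − t_{n−1}|⁻¹ · max{ |g_z| : z ∈ G, V(z) ∈ [t_n, 0] }`
(limsups in the extended reals). -/
theorem mismatch_limsup_lower_bound_bounded_above
    {G : Type*} [Countable G] [Infinite G]
    (V : G → ℝ) (hbdd : BddAbove (Set.range V))
    (hacc : ∀ x : ℝ, ¬ AccPt x (Filter.principal (Set.range V)))
    (hlevel : ∀ x : ℝ, {z : G | V z = x}.Finite)
    (t : ℕ → ℝ) (ht : StrictAnti t) (ht0 : t 0 < 0)
    (hrange : Set.range t = {x : ℝ | x ∈ Set.range V ∧ x < 0})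
    (g : G → ℝ) (T : Finset G) (k : ℕ) (hk : k < T.card)
    (B : Finset G) (hB : B.card = k)
    (φ : ((↑B : Set G)ᶜ : Set G) ≃ ((↑T : Set G)ᶜ : Set G)) :
    1 - Filter.limsup (fun n : ℕ =>
        ((|t n - t (n - 1)|⁻¹ *
          sSup ((fun z => |g z|) '' {z : G | V z ∈ Set.Icc (t n) 0}) : ℝ) : EReal))
        Filter.atTop ≤
      Filter.limsup (fun n : ℕ =>
        ((|t n - t (n - 1)|⁻¹ *
          sSup ((fun w : ((↑B : Set G)ᶜ : Set G) => |V (φ w).1 + g (φ w).1 - V w.1|) ''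
            {w : ((↑B : Set G)ᶜ : Set G) | V w.1 ∈ Set.Icc (t n) 0}) : ℝ) : EReal))
        Filter.atTop := by
  classical
  obtain ⟨M, hM⟩ := hbdd
  have hMle : ∀ z : G, V z ≤ M := fun z => hM ⟨z, rfl⟩
  have hfin : ∀ a : ℝ, {z : G | V z ∈ Set.Icc a 0}.Finite := fun a => slab_finite hacc hlevel a 0
  have hfinA : ∀ a : ℝ, {z : G | a ≤ V z}.Finite := by
    intro a
    have hs : {z : G | a ≤ V z} ⊆ {z : G | V z ∈ Set.Icc a M} := fun z hz => ⟨hz, hMle z⟩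
    exact (slab_finite hacc hlevel a M).subset hs
  have htsub : Set.range t ⊆ Set.range V := by
    rw [hrange]; exact fun x hx => hx.1
  have htB : Filter.Tendsto t Filter.atTop Filter.atBot :=
    strictAnti_tendsto_atBot hacc ht htsub
  have htneg : ∀ n, t n < 0 := fun n => by
    have hmem : t n ∈ Set.range t := ⟨n, rfl⟩
    rw [hrange] at hmem; exact hmem.2
  have hP : {z : G | 0 < V z}.Finite :=
    (hfinA 0).subset (fun z hz => show (0:ℝ) ≤ V z from le_of_lt hz)
  -- eventual conditions
  have h1 : ∀ᶠ n in Filter.atTop, ∀ w ∈ T, t n ≤ V w := by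
    rw [eventually_all_finset]
    exact fun w _ => htB.eventually (eventually_le_atBot (V w))
  have h2 : ∀ᶠ n in Filter.atTop, ∀ w ∈ hP.toFinset,
      ∀ hw : w ∈ ((↑B : Set G)ᶜ : Set G), t n ≤ V (φ ⟨w, hw⟩).1 := by
    rw [eventually_all_finset]
    intro w _
    by_cases hwB : w ∈ ((↑B : Set G)ᶜ : Set G)
    · exact (htB.eventually (eventually_le_atBot (V (φ ⟨w, hwB⟩).1))).mono
        (fun n hn hw => hn)
    · filter_upwards with n hw
      exact absurd hw hwB
  obtain ⟨N, hN⟩ := Filter.eventually_atTop.1 (h1.and h2)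
  -- key combinatorial step
  have key : ∀ n, N ≤ n → ∃ z : G, ∃ hz : z ∈ ((↑B : Set G)ᶜ : Set G),
      t n ≤ V z ∧ V z ≤ 0 ∧ V (φ ⟨z, hz⟩).1 < t n := by
    intro n hn
    obtain ⟨hT, hPc⟩ := hN n hn
    set A : Finset G := (hfinA (t n)).toFinset with hA
    have hmemA : ∀ z : G, z ∈ A ↔ t n ≤ V z := fun z => by
      rw [hA, Set.Finite.mem_toFinset]; rfl
    have hTA : T ⊆ A := fun w hw => (hmemA w).2 (hT w hw)
    have main : ∃ z : G, ∃ hz : z ∈ ((↑B : Set G)ᶜ : Set G),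
        t n ≤ V z ∧ V (φ ⟨z, hz⟩).1 < t n := by
      by_contra hcon
      push_neg at hcon
      set f : G → G := fun z =>
        if hz : z ∈ ((↑B : Set G)ᶜ : Set G) then (φ ⟨z, hz⟩).1 else z with hf
      have hmaps : ∀ z ∈ A \ B, f z ∈ A \ T := by
        intro z hzmem
        rw [Finset.mem_sdiff] at hzmem
        have hzB : z ∈ ((↑B : Set G)ᶜ : Set G) := by
          simpa using hzmem.2
        have hfz : f z = (φ ⟨z, hzB⟩).1 := by rw [hf]; exact dif_pos hzB
        rw [Finset.mem_sdiff, hfz]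
        constructor
        · exact (hmemA _).2 (hcon z hzB ((hmemA z).1 hzmem.1))
        · intro hmem
          exact (φ ⟨z, hzB⟩).2 (Finset.mem_coe.2 hmem)
      have hinj : Set.InjOn f ↑(A \ B) := by
        intro z1 hz1 z2 hz2 hfz
        rw [Finset.mem_coe, Finset.mem_sdiff] at hz1 hz2
        have hz1B : z1 ∈ ((↑B : Set G)ᶜ : Set G) := by simpa using hz1.2
        have hz2B : z2 ∈ ((↑B : Set G)ᶜ : Set G) := by simpa using hz2.2
        rw [hf] at hfz
        simp only [dif_pos hz1B, dif_pos hz2B] at hfz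
        have := φ.injective (Subtype.ext hfz)
        exact congrArg Subtype.val this
      have hcard := Finset.card_le_card_of_injOn f hmaps hinj
      have hc1 : A.card - B.card ≤ (A \ B).card := Finset.le_card_sdiff B A
      have hc2 : (A \ T).card = A.card - T.card := Finset.card_sdiff_of_subset hTA
      have hc3 : T.card ≤ A.card := Finset.card_le_card hTA
      omega
    obtain ⟨z, hz, hz1, hz2⟩ := main
    refine ⟨z, hz, hz1, ?_, hz2⟩
    by_contra h0
    push_neg at h0
    have hzP : z ∈ hP.toFinset := by
      rw [Set.Finite.mem_toFinset]; exact h0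
    exact absurd (hPc z hzP hz) (not_le.2 hz2)
  -- frequently, the real inequality holds
  have freq : ∀ N' : ℕ, ∃ m, N' ≤ m ∧
      (1 : ℝ) - |t m - t (m - 1)|⁻¹ *
          sSup ((fun z => |g z|) '' {z : G | V z ∈ Set.Icc (t m) 0}) ≤
        |t m - t (m - 1)|⁻¹ *
          sSup ((fun w : ((↑B : Set G)ᶜ : Set G) => |V (φ w).1 + g (φ w).1 - V w.1|) ''
            {w : ((↑B : Set G)ᶜ : Set G) | V w.1 ∈ Set.Icc (t m) 0}) := by
    intro N'
    obtain ⟨z, hz, hz1, hz2, hz3⟩ := key (max N N') (le_max_left _ _)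
    set n := max N N' with hn
    have hVφ : V (φ ⟨z, hz⟩).1 ∈ Set.range t := by
      rw [hrange]
      exact ⟨⟨_, rfl⟩, lt_trans hz3 (htneg n)⟩
    obtain ⟨m, hm⟩ := hVφ
    have htmn : t m < t n := by rw [hm]; exact hz3
    have hnm : n < m := ht.lt_iff_gt.1 htmn
    have htm1 : t (m - 1) ≤ t n := ht.antitone (by omega)
    have hgap : t m < t (m - 1) := ht (by omega)
    have habs : |t m - t (m - 1)| = t (m - 1) - t m := by
      rw [abs_sub_comm]; exact abs_of_pos (by linarith)
    have hfinm := hfin (t m)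
    set w : G := (φ ⟨z, hz⟩).1 with hw
    have hw0 : w ∈ {z : G | V z ∈ Set.Icc (t m) 0} :=
      ⟨hm.le, le_of_lt (by rw [← hm]; exact htneg m)⟩
    have hgle : |g w| ≤ sSup ((fun z => |g z|) '' {z : G | V z ∈ Set.Icc (t m) 0}) :=
      le_csSup ((hfinm.image _).bddAbove) ⟨w, hw0, rfl⟩
    have hsetfin : {w' : ((↑B : Set G)ᶜ : Set G) | V w'.1 ∈ Set.Icc (t m) 0}.Finite := by
      have himg : Subtype.val '' {w' : ((↑B : Set G)ᶜ : Set G) | V w'.1 ∈ Set.Icc (t m) 0} ⊆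
          {z : G | V z ∈ Set.Icc (t m) 0} := by
        rintro _ ⟨w', hw', rfl⟩; exact hw'
      exact Set.Finite.of_finite_image (hfinm.subset himg) (Subtype.coe_injective.injOn)
    have hzmem : (⟨z, hz⟩ : ((↑B : Set G)ᶜ : Set G)) ∈
        {w' : ((↑B : Set G)ᶜ : Set G) | V w'.1 ∈ Set.Icc (t m) 0} :=
      ⟨le_trans (le_of_lt htmn) hz1, hz2⟩
    have hsale : |V w + g w - V z| ≤
        sSup ((fun w' : ((↑B : Set G)ᶜ : Set G) => |V (φ w').1 + g (φ w').1 - V w'.1|) ''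
          {w' : ((↑B : Set G)ᶜ : Set G) | V w'.1 ∈ Set.Icc (t m) 0}) :=
      le_csSup ((hsetfin.image _).bddAbove) ⟨⟨z, hz⟩, hzmem, rfl⟩
    have helem : t (m - 1) - t m - |g w| ≤ |V w + g w - V z| := by
      have e1 := abs_add_le (V w + g w - V z) (-(g w))
      rw [abs_neg] at e1
      have e2 : V w + g w - V z + -(g w) = V w - V z := by ring
      rw [e2] at e1
      have e3 : V z - V w ≤ |V w - V z| := by
        rw [abs_sub_comm]; exact le_abs_self _
      have e4 : t (m - 1) - t m ≤ V z - V w := by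
        rw [hw, ← hm]; linarith
      linarith
    have hgappos : (0 : ℝ) < t (m - 1) - t m := by linarith
    refine ⟨m, le_trans (le_max_right N N') (le_of_lt hnm), ?_⟩
    rw [habs]
    have h5 : t (m - 1) - t m -
        sSup ((fun z => |g z|) '' {z : G | V z ∈ Set.Icc (t m) 0}) ≤
        sSup ((fun w' : ((↑B : Set G)ᶜ : Set G) => |V (φ w').1 + g (φ w').1 - V w'.1|) ''
          {w' : ((↑B : Set G)ᶜ : Set G) | V w'.1 ∈ Set.Icc (t m) 0}) := by
      linarith
    have h6 := mul_le_mul_of_nonneg_left h5 (le_of_lt (inv_pos.2 hgappos))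
    rw [mul_sub, inv_mul_cancel₀ (ne_of_gt hgappos)] at h6
    linarith
  -- EReal conclusion
  by_contra hcontra
  push_neg at hcontra
  obtain ⟨c, hc1, hc2⟩ := exists_between hcontra
  have hcT : c ≠ ⊤ := ne_top_of_lt hc2
  have hcB : c ≠ ⊥ := by
    intro h
    rw [h] at hc1
    exact absurd hc1 (by simp)
  set r := c.toReal with hr
  have hcr : (r : EReal) = c := EReal.coe_toReal hcT hcB
  have hev := Filter.eventually_lt_of_limsup_lt hc1
  obtain ⟨N₀, hN₀⟩ := Filter.eventually_atTop.1 hev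
  have hfreq2 : ∃ᶠ m in Filter.atTop, (((1 : ℝ) - r : ℝ) : EReal) ≤
      ((|t m - t (m - 1)|⁻¹ *
        sSup ((fun z => |g z|) '' {z : G | V z ∈ Set.Icc (t m) 0}) : ℝ) : EReal) := by
    rw [Filter.frequently_atTop]
    intro a
    obtain ⟨m, hm1, hm2⟩ := freq (max a N₀)
    refine ⟨m, le_trans (le_max_left _ _) hm1, ?_⟩
    have hAm := hN₀ m (le_trans (le_max_right _ _) hm1)
    rw [← hcr] at hAm
    have hAm' := EReal.coe_lt_coe_iff.1 hAm
    exact EReal.coe_le_coe_iff.2 (by linarith)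
  have hle := Filter.le_limsup_of_frequently_le' hfreq2
  have hfinal : (1 : EReal) - Filter.limsup (fun n : ℕ =>
      ((|t n - t (n - 1)|⁻¹ *
        sSup ((fun z => |g z|) '' {z : G | V z ∈ Set.Icc (t n) 0}) : ℝ) : EReal))
      Filter.atTop ≤ (r : EReal) := by
    calc (1 : EReal) - Filter.limsup _ Filter.atTop
        ≤ (1 : EReal) - (((1 : ℝ) - r : ℝ) : EReal) := EReal.sub_le_sub le_rfl hle
      _ = (r : EReal) := by
          rw [← EReal.coe_one, ← EReal.coe_sub]
          norm_num
  rw [← hcr] at hc2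
  exact absurd (lt_of_lt_of_le hc2 hfinal) (lt_irrefl _)
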